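/- Let G(t) = ∫_a^t F with F : [a,b] → [f_bw, f_u], 0 < f_bw < f_u, and fix m ∈ (a,b) and prescribed values G(m) = c₁, G(b) = c₂ with c₂ > c₁ > 0, f_bw(m-a) ≤ c₁ ≤ f_u(m-a), f_bw(b-m) ≤ c₂-c₁ ≤ f_u(b-m). Then the infimum of J(F) = ∫_a^m G(t) dt − ∫_m^b G(t) dt over admissible F is attained by the three-piece bang-bang control F = f_bw on [a, a+τ₁], F = f_u on (a+τ₁, m+τ₂], F = f_bw on (m+τ₂, b], where τ₁ = (f_u(m-a) - c₁)/(f_u - f_bw) and τ₂ = ((c₂-c₁) - f_bw(b-m))/(f_u - f_bw). -/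

import Mathlib

open MeasureTheory intervalIntegral

/-- The low-high-low three-piece bang-bang control with switching times
`a + τ₁` and `m + τ₂`. -/
noncomputable def lowHighLow (a m τ₁ τ₂ f_bw f_u : ℝ) : ℝ → ℝ := fun t =>
  if t ≤ a + τ₁ then f_bw else if t ≤ m + τ₂ then f_u else f_bw

private lemma integral_eq_of_eqOn_Ioc {f : ℝ → ℝ} {x y c : ℝ} (hxy : x ≤ y)
    (h : ∀ t ∈ Set.Ioc x y, f t = c) : (∫ t in x..y, f t) = c * (y - x) := by
  rw [intervalIntegral.integral_of_le hxy,
    setIntegral_congr_fun measurableSet_Ioc h, setIntegral_const,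
    Real.volume_real_Ioc_of_le hxy, smul_eq_mul, mul_comm]

theorem three_piece_bang_bang_min (a m b f_bw f_u c₁ c₂ : ℝ)
    (ham : a < m) (hmb : m < b) (hbw : 0 < f_bw) (hbu : f_bw < f_u)
    (hc₁pos : 0 < c₁) (hc₁₂ : c₁ < c₂)
    (hc₁lo : f_bw * (m - a) ≤ c₁) (hc₁hi : c₁ ≤ f_u * (m - a))
    (hc₂lo : f_bw * (b - m) ≤ c₂ - c₁) (hc₂hi : c₂ - c₁ ≤ f_u * (b - m)) :
    ∀ F : ℝ → ℝ, IntervalIntegrable F volume a b →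
      (∀ t ∈ Set.Icc a b, F t ∈ Set.Icc f_bw f_u) →
      (∫ t in a..m, F t) = c₁ → (∫ t in a..b, F t) = c₂ →
      ((∫ t in a..m, ∫ s in a..t,
          lowHighLow a m ((f_u * (m - a) - c₁) / (f_u - f_bw))
            (((c₂ - c₁) - f_bw * (b - m)) / (f_u - f_bw)) f_bw f_u s) -
        ∫ t in m..b, ∫ s in a..t,
          lowHighLow a m ((f_u * (m - a) - c₁) / (f_u - f_bw))
            (((c₂ - c₁) - f_bw * (b - m)) / (f_u - f_bw)) f_bw f_u s) ≤
      (∫ t in a..m, ∫ s in a..t, F s) - ∫ t in m..b, ∫ s in a..t, F s := by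
  intro F hFint hFbnd hFm hFb
  set τ₁ : ℝ := (f_u * (m - a) - c₁) / (f_u - f_bw) with hτ₁def
  set τ₂ : ℝ := ((c₂ - c₁) - f_bw * (b - m)) / (f_u - f_bw) with hτ₂def
  set Fs : ℝ → ℝ := lowHighLow a m τ₁ τ₂ f_bw f_u with hFsdef
  have hd : (0:ℝ) < f_u - f_bw := by linarith
  have hτ₁mul : (f_u - f_bw) * τ₁ = f_u * (m - a) - c₁ := by
    rw [hτ₁def]; field_simp
  have hτ₂mul : (f_u - f_bw) * τ₂ = (c₂ - c₁) - f_bw * (b - m) := by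
    rw [hτ₂def]; field_simp
  clear_value τ₁ τ₂ Fs
  have hτ₁0 : 0 ≤ τ₁ := by
    rw [hτ₁def]; exact div_nonneg (by linarith) (le_of_lt hd)
  have hτ₂0 : 0 ≤ τ₂ := by
    rw [hτ₂def]; exact div_nonneg (by linarith) (le_of_lt hd)
  have hpm : a + τ₁ ≤ m := by
    have : τ₁ ≤ m - a := by
      rw [hτ₁def, div_le_iff₀ hd]; nlinarith
    linarith
  have hqb : m + τ₂ ≤ b := by
    have : τ₂ ≤ b - m := by
      rw [hτ₂def, div_le_iff₀ hd]; nlinarith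
    linarith
  have hap : a ≤ a + τ₁ := by linarith
  have hmq : m ≤ m + τ₂ := by linarith
  have hab : a ≤ b := by linarith
  -- integrability of the bang-bang control
  have hFs_meas : Measurable Fs := by
    rw [hFsdef]; unfold lowHighLow
    exact Measurable.ite measurableSet_Iic measurable_const
      (Measurable.ite measurableSet_Iic measurable_const measurable_const)
  have hFs_int : ∀ x y : ℝ, IntervalIntegrable Fs volume x y := by
    intro x y
    refine IntervalIntegrable.mono_fun'
      (intervalIntegrable_const (c := f_u))
      hFs_meas.aestronglyMeasurable ?_
    refine Filter.Eventually.of_forall fun t => ?_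
    rw [hFsdef]; unfold lowHighLow
    simp only [Real.norm_eq_abs]
    split_ifs <;> rw [abs_of_pos (by linarith)] <;> linarith
  -- integrability of F on subintervals
  have hFsub : ∀ x y : ℝ, x ∈ Set.Icc a b → y ∈ Set.Icc a b →
      IntervalIntegrable F volume x y := by
    intro x y hx hy
    refine hFint.mono_set ?_
    rw [Set.uIcc_of_le hab]
    exact Set.uIcc_subset_Icc hx hy
  -- values of the bang-bang control
  have hv1 : ∀ s : ℝ, s ≤ a + τ₁ → Fs s = f_bw := by
    intro s hs; rw [hFsdef]; unfold lowHighLow; simp [hs]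
  have hv2 : ∀ s : ℝ, a + τ₁ < s → s ≤ m + τ₂ → Fs s = f_u := by
    intro s hs1 hs2; rw [hFsdef]; unfold lowHighLow; simp [not_le.2 hs1, hs2]
  have hv3 : ∀ s : ℝ, m + τ₂ < s → Fs s = f_bw := by
    intro s hs; rw [hFsdef]; unfold lowHighLow
    have h1 : ¬ s ≤ a + τ₁ := not_le.2 (lt_of_le_of_lt (hpm.trans hmq) hs)
    simp [h1, not_le.2 hs]
  -- integrals of the bang-bang control
  have hIam : (∫ s in a..m, Fs s) = c₁ := by
    rw [← intervalIntegral.integral_add_adjacent_intervals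
      (hFs_int a (a + τ₁)) (hFs_int (a + τ₁) m)]
    have e1 : (∫ s in a..(a + τ₁), Fs s) = f_bw * (a + τ₁ - a) :=
      integral_eq_of_eqOn_Ioc hap fun t ht => hv1 t ht.2
    have e2 : (∫ s in (a + τ₁)..m, Fs s) = f_u * (m - (a + τ₁)) :=
      integral_eq_of_eqOn_Ioc hpm fun t ht => hv2 t ht.1 (ht.2.trans hmq)
    rw [e1, e2]
    linear_combination -hτ₁mul
  have hImb : (∫ s in m..b, Fs s) = c₂ - c₁ := by
    rw [← intervalIntegral.integral_add_adjacent_intervals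
      (hFs_int m (m + τ₂)) (hFs_int (m + τ₂) b)]
    have e1 : (∫ s in m..(m + τ₂), Fs s) = f_u * (m + τ₂ - m) :=
      integral_eq_of_eqOn_Ioc hmq fun t ht =>
        hv2 t (lt_of_le_of_lt hpm ht.1) ht.2
    have e2 : (∫ s in (m + τ₂)..b, Fs s) = f_bw * (b - (m + τ₂)) :=
      integral_eq_of_eqOn_Ioc hqb fun t ht => hv3 t ht.1
    rw [e1, e2]
    linear_combination hτ₂mul
  have hIab : (∫ s in a..b, Fs s) = c₂ := by
    rw [← intervalIntegral.integral_add_adjacent_intervals (hFs_int a m) (hFs_int m b),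
      hIam, hImb]; ring
  -- the difference of primitives
  set H : ℝ → ℝ := fun t => (∫ s in a..t, F s) - ∫ s in a..t, Fs s with hHdef
  -- H ≥ 0 on [a, m]
  have hH1 : ∀ t ∈ Set.Icc a m, 0 ≤ H t := by
    intro t ht
    have htb : t ∈ Set.Icc a b := ⟨ht.1, ht.2.trans (le_of_lt hmb)⟩
    by_cases hcase : t ≤ a + τ₁
    · have e : H t = ∫ s in a..t, (F s - Fs s) :=
        (intervalIntegral.integral_sub (hFsub a t (Set.left_mem_Icc.2 hab) htb)
          (hFs_int a t)).symm
      rw [e, intervalIntegral.integral_of_le ht.1]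
      refine setIntegral_nonneg measurableSet_Ioc fun s hs => ?_
      have hsb : s ∈ Set.Icc a b := ⟨le_of_lt hs.1, hs.2.trans htb.2⟩
      have hv : Fs s = f_bw := hv1 s (hs.2.trans hcase)
      have := (hFbnd s hsb).1
      rw [hv]; linarith
    · -- use H t = ∫_t^m (Fs - F)
      have hFat : IntervalIntegrable F volume a t := hFsub a t (Set.left_mem_Icc.2 hab) htb
      have hFtm : IntervalIntegrable F volume t m :=
        hFsub t m htb ⟨le_of_lt ham, le_of_lt hmb⟩
      have e1 : (∫ s in a..t, F s) = c₁ - ∫ s in t..m, F s := by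
        rw [← hFm, ← intervalIntegral.integral_add_adjacent_intervals hFat hFtm]; ring
      have e2 : (∫ s in a..t, Fs s) = c₁ - ∫ s in t..m, Fs s := by
        rw [← hIam, ← intervalIntegral.integral_add_adjacent_intervals
          (hFs_int a t) (hFs_int t m)]; ring
      have e : H t = ∫ s in t..m, (Fs s - F s) := by
        rw [hHdef]; simp only
        rw [e1, e2, intervalIntegral.integral_sub (hFs_int t m) hFtm]; ring
      rw [e, intervalIntegral.integral_of_le ht.2]
      refine setIntegral_nonneg measurableSet_Ioc fun s hs => ?_
      have hsb : s ∈ Set.Icc a b :=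
        ⟨htb.1.trans (le_of_lt hs.1), hs.2.trans (le_of_lt hmb)⟩
      have hv : Fs s = f_u :=
        hv2 s (lt_trans (not_le.1 hcase) hs.1) (hs.2.trans hmq)
      have := (hFbnd s hsb).2
      rw [hv]; linarith
  -- H ≤ 0 on [m, b]
  have hH2 : ∀ t ∈ Set.Icc m b, H t ≤ 0 := by
    intro t ht
    have htb : t ∈ Set.Icc a b := ⟨(le_of_lt ham).trans ht.1, ht.2⟩
    by_cases hcase : t ≤ m + τ₂
    · have hFmt : IntervalIntegrable F volume m t :=
        hFsub m t ⟨le_of_lt ham, le_of_lt hmb⟩ htb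
      have hFam : IntervalIntegrable F volume a m :=
        hFsub a m (Set.left_mem_Icc.2 hab) ⟨le_of_lt ham, le_of_lt hmb⟩
      have e1 : (∫ s in a..t, F s) = c₁ + ∫ s in m..t, F s := by
        rw [← hFm, intervalIntegral.integral_add_adjacent_intervals hFam hFmt]
      have e2 : (∫ s in a..t, Fs s) = c₁ + ∫ s in m..t, Fs s := by
        rw [← hIam, intervalIntegral.integral_add_adjacent_intervals
          (hFs_int a m) (hFs_int m t)]
      have e : H t = ∫ s in m..t, (F s - Fs s) := by
        rw [hHdef]; simp only
        rw [e1, e2, intervalIntegral.integral_sub hFmt (hFs_int m t)]; ring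
      rw [e, intervalIntegral.integral_of_le ht.1]
      refine setIntegral_nonpos measurableSet_Ioc fun s hs => ?_
      have hsb : s ∈ Set.Icc a b :=
        ⟨(le_of_lt ham).trans (le_of_lt hs.1), hs.2.trans ht.2⟩
      have hv : Fs s = f_u :=
        hv2 s (lt_of_le_of_lt hpm hs.1) (hs.2.trans hcase)
      have := (hFbnd s hsb).2
      rw [hv]; linarith
    · have hFat : IntervalIntegrable F volume a t := hFsub a t (Set.left_mem_Icc.2 hab) htb
      have hFtb : IntervalIntegrable F volume t b :=
        hFsub t b htb (Set.right_mem_Icc.2 hab)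
      have e1 : (∫ s in a..t, F s) = c₂ - ∫ s in t..b, F s := by
        rw [← hFb, ← intervalIntegral.integral_add_adjacent_intervals hFat hFtb]; ring
      have e2 : (∫ s in a..t, Fs s) = c₂ - ∫ s in t..b, Fs s := by
        rw [← hIab, ← intervalIntegral.integral_add_adjacent_intervals
          (hFs_int a t) (hFs_int t b)]; ring
      have e : H t = ∫ s in t..b, (Fs s - F s) := by
        rw [hHdef]; simp only
        rw [e1, e2, intervalIntegral.integral_sub (hFs_int t b) hFtb]; ring
      rw [e, intervalIntegral.integral_of_le ht.2]
      refine setIntegral_nonpos measurableSet_Ioc fun s hs => ?_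
      have hsb : s ∈ Set.Icc a b :=
        ⟨(le_of_lt ham).trans (ht.1.trans (le_of_lt hs.1)), hs.2⟩
      have hv : Fs s = f_bw := hv3 s (lt_trans (not_le.1 hcase) hs.1)
      have := (hFbnd s hsb).1
      rw [hv]; linarith
  -- continuity / integrability of the primitives
  have hFIcc : IntegrableOn F (Set.uIcc a b) volume := by
    rw [Set.uIcc_of_le hab, integrableOn_Icc_iff_integrableOn_Ioc]
    exact hFint.1
  have hFsIcc : IntegrableOn Fs (Set.uIcc a b) volume := by
    rw [Set.uIcc_of_le hab, integrableOn_Icc_iff_integrableOn_Ioc]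
    exact (hFs_int a b).1
  have hG1cont : ContinuousOn (fun t => ∫ s in a..t, F s) (Set.Icc a b) := by
    have := intervalIntegral.continuousOn_primitive_interval (μ := volume) hFIcc
    rwa [Set.uIcc_of_le hab] at this
  have hG2cont : ContinuousOn (fun t => ∫ s in a..t, Fs s) (Set.Icc a b) := by
    have := intervalIntegral.continuousOn_primitive_interval (μ := volume) hFsIcc
    rwa [Set.uIcc_of_le hab] at this
  have hsub1 : Set.uIcc a m ⊆ Set.Icc a b := by
    rw [Set.uIcc_of_le (le_of_lt ham)]
    exact Set.Icc_subset_Icc le_rfl (le_of_lt hmb)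
  have hsub2 : Set.uIcc m b ⊆ Set.Icc a b := by
    rw [Set.uIcc_of_le (le_of_lt hmb)]
    exact Set.Icc_subset_Icc (le_of_lt ham) le_rfl
  have hG1am : IntervalIntegrable (fun t => ∫ s in a..t, F s) volume a m :=
    (hG1cont.mono hsub1).intervalIntegrable
  have hG2am : IntervalIntegrable (fun t => ∫ s in a..t, Fs s) volume a m :=
    (hG2cont.mono hsub1).intervalIntegrable
  have hG1mb : IntervalIntegrable (fun t => ∫ s in a..t, F s) volume m b :=
    (hG1cont.mono hsub2).intervalIntegrable
  have hG2mb : IntervalIntegrable (fun t => ∫ s in a..t, Fs s) volume m b :=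
    (hG2cont.mono hsub2).intervalIntegrable
  -- conclude
  have key1 : 0 ≤ ∫ t in a..m, H t :=
    intervalIntegral.integral_nonneg (le_of_lt ham) hH1
  have key2 : (∫ t in m..b, H t) ≤ 0 := by
    rw [intervalIntegral.integral_of_le (le_of_lt hmb)]
    exact setIntegral_nonpos measurableSet_Ioc fun t ht =>
      hH2 t ⟨le_of_lt ht.1, ht.2⟩
  have eq1 : (∫ t in a..m, H t)
      = (∫ t in a..m, ∫ s in a..t, F s) - ∫ t in a..m, ∫ s in a..t, Fs s :=
    intervalIntegral.integral_sub hG1am hG2am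
  have eq2 : (∫ t in m..b, H t)
      = (∫ t in m..b, ∫ s in a..t, F s) - ∫ t in m..b, ∫ s in a..t, Fs s :=
    intervalIntegral.integral_sub hG1mb hG2mb
  linarith [key1, key2, eq1.symm, eq2.symm]
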